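/- Let K be a field of characteristic 0 and n ≥ 1. Then the group GL_n(K) is generated by the subgroup T_n(K) of invertible diagonal matrices together with the image of GL_n(ℤ) in GL_n(K) (i.e. the set of matrices with entries in the image of ℤ → K which are invertible with inverse also having entries in the image of ℤ). -/

import Mathlib

open Matrix

section aux

variable {K : Type*} [Field K] {n : ℕ}

/-- The transvection as a unit. -/
def tUnit (i j : Fin n) (h : i ≠ j) (c : K) : Matrix.GeneralLinearGroup (Fin n) K where
  val := transvection i j c
  inv := transvection i j (-c)
  val_inv := by rw [transvection_mul_transvection_same _ _ h, add_neg_cancel, transvection_zero]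
  inv_val := by rw [transvection_mul_transvection_same _ _ h, neg_add_cancel, transvection_zero]

def tUnitZ (i j : Fin n) (h : i ≠ j) : Matrix.GeneralLinearGroup (Fin n) ℤ where
  val := transvection i j 1
  inv := transvection i j (-1)
  val_inv := by rw [transvection_mul_transvection_same _ _ h, add_neg_cancel, transvection_zero]
  inv_val := by rw [transvection_mul_transvection_same _ _ h, neg_add_cancel, transvection_zero]

lemma map_transvection_one (i j : Fin n) :
    ((Int.castRingHom K).mapMatrix (transvection i j (1 : ℤ))) = transvection i j (1 : K) := by
  ext a b
  rw [RingHom.mapMatrix_apply, Matrix.map_apply]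
  simp only [transvection, Matrix.add_apply, Matrix.one_apply, Matrix.single,
    Matrix.of_apply, Int.castRingHom, RingHom.coe_mk, MonoidHom.coe_mk, OneHom.coe_mk]
  split_ifs <;> push_cast <;> ring

lemma diag_mul_std (d : Fin n → K) (i j : Fin n) (c : K) :
    diagonal d * single i j c = single i j (d i * c) := by
  ext a b
  rw [Matrix.diagonal_mul]
  simp only [single, of_apply]
  split_ifs with hh
  · rw [hh.1]
  · ring

lemma std_mul_diag (d : Fin n → K) (i j : Fin n) (c : K) :
    single i j c * diagonal d = single i j (c * d j) := by
  ext a b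
  rw [Matrix.mul_diagonal]
  simp only [single, of_apply]
  split_ifs with hh
  · rw [hh.2]
  · ring

lemma diag_conj (i j : Fin n) (h : i ≠ j) (c : K) (hc : c ≠ 0) :
    diagonal (Function.update (fun _ => (1:K)) i c) * transvection i j 1 *
      diagonal (Function.update (fun _ => (1:K)) i c⁻¹) = transvection i j c := by
  have h1 : (fun k => Function.update (fun _ => (1:K)) i c k *
      Function.update (fun _ => (1:K)) i c⁻¹ k) = fun _ => (1:K) := by
    funext k
    rcases eq_or_ne k i with rfl | hk
    · simp [Function.update_apply, mul_inv_cancel₀ hc]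
    · simp [Function.update_apply, hk]
  rw [transvection, transvection, Matrix.mul_add, Matrix.mul_one, Matrix.add_mul,
    diagonal_mul_diagonal, h1, diagonal_one, diag_mul_std, std_mul_diag,
    Function.update_self, Function.update_of_ne (Ne.symm h)]
  norm_num

end aux

/-- For a field `K` of characteristic zero, `GL_n(K)` is generated by the invertible diagonal
matrices together with the image of `GL_n(ℤ) → GL_n(K)`. -/
theorem statement13 (K : Type*) [Field K] [CharZero K] (n : ℕ) :
    Subgroup.closure
      ({g : Matrix.GeneralLinearGroup (Fin n) K |
          ∃ d : Fin n → K, (g : Matrix (Fin n) (Fin n) K) = Matrix.diagonal d} ∪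
        Set.range (fun g : Matrix.GeneralLinearGroup (Fin n) ℤ =>
          Units.map ((Int.castRingHom K).mapMatrix (m := Fin n)).toMonoidHom g)) = ⊤ := by
  set S : Set (Matrix.GeneralLinearGroup (Fin n) K) :=
    ({g : Matrix.GeneralLinearGroup (Fin n) K |
          ∃ d : Fin n → K, (g : Matrix (Fin n) (Fin n) K) = Matrix.diagonal d} ∪
        Set.range (fun g : Matrix.GeneralLinearGroup (Fin n) ℤ =>
          Units.map ((Int.castRingHom K).mapMatrix (m := Fin n)).toMonoidHom g)) with hS
  -- diagonal units are in the closure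
  have hdiag : ∀ (g : Matrix.GeneralLinearGroup (Fin n) K) (d : Fin n → K),
      (g : Matrix (Fin n) (Fin n) K) = Matrix.diagonal d → g ∈ Subgroup.closure S := by
    intro g d hg
    exact Subgroup.subset_closure (Or.inl ⟨d, hg⟩)
  -- transvection units are in the closure
  have htrans : ∀ (i j : Fin n) (h : i ≠ j) (c : K),
      tUnit i j h c ∈ Subgroup.closure S := by
    intro i j h c
    rcases eq_or_ne c 0 with rfl | hc
    · have : tUnit i j h (0:K) = 1 := Units.ext (transvection_zero i j)
      rw [this]; exact one_mem _
    · -- the integer transvection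
      have h1 : (Units.map ((Int.castRingHom K).mapMatrix (m := Fin n)).toMonoidHom
          (tUnitZ i j h)) ∈ Subgroup.closure S :=
        Subgroup.subset_closure (Or.inr ⟨tUnitZ i j h, rfl⟩)
      have hd1 : IsUnit (diagonal (Function.update (fun _ => (1:K)) i c)) := by
        rw [Matrix.isUnit_iff_isUnit_det, Matrix.det_diagonal]
        refine IsUnit.of_mul_eq_one (∏ k, (Function.update (fun _ => (1:K)) i c k)⁻¹) ?_
        rw [← Finset.prod_mul_distrib]
        refine Finset.prod_eq_one fun k _ => mul_inv_cancel₀ ?_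
        rcases eq_or_ne k i with rfl | hk
        · simp [Function.update_apply, hc]
        · simp [Function.update_apply, hk]
      have hd2 : IsUnit (diagonal (Function.update (fun _ => (1:K)) i c⁻¹)) := by
        rw [Matrix.isUnit_iff_isUnit_det, Matrix.det_diagonal]
        refine IsUnit.of_mul_eq_one (∏ k, (Function.update (fun _ => (1:K)) i c⁻¹ k)⁻¹) ?_
        rw [← Finset.prod_mul_distrib]
        refine Finset.prod_eq_one fun k _ => mul_inv_cancel₀ ?_
        rcases eq_or_ne k i with rfl | hk
        · simp [Function.update_apply, hc]
        · simp [Function.update_apply, hk]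
      have key : tUnit i j h c =
          hd1.unit * (Units.map ((Int.castRingHom K).mapMatrix (m := Fin n)).toMonoidHom
            (tUnitZ i j h)) * hd2.unit := by
        apply Units.ext
        push_cast
        show (transvection i j c : Matrix (Fin n) (Fin n) K) = _
        rw [IsUnit.unit_spec, IsUnit.unit_spec]
        have hmap : ((Int.castRingHom K).mapMatrix.toMonoidHom
            (tUnitZ i j h : Matrix (Fin n) (Fin n) ℤ)) = transvection i j (1 : K) :=
          map_transvection_one i j
        show _ = _ * ((Int.castRingHom K).mapMatrix.toMonoidHom
          (tUnitZ i j h : Matrix (Fin n) (Fin n) ℤ)) * _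
        rw [hmap, diag_conj i j h c hc]
      rw [key]
      exact mul_mem (mul_mem (hdiag _ _ (IsUnit.unit_spec hd1)) h1)
        (hdiag _ _ (IsUnit.unit_spec hd2))
  -- transvection struct units
  have hts : ∀ L : List (TransvectionStruct (Fin n) K),
      ∃ u ∈ Subgroup.closure S,
        (u : Matrix (Fin n) (Fin n) K) = (L.map TransvectionStruct.toMatrix).prod := by
    intro L
    induction L with
    | nil => exact ⟨1, one_mem _, by simp⟩
    | cons t L ih =>
      obtain ⟨u, hu, hu'⟩ := ih
      refine ⟨tUnit t.i t.j t.hij t.c * u, mul_mem (htrans _ _ _ _) hu, ?_⟩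
      simp [Units.val_mul, hu', tUnit, TransvectionStruct.toMatrix]
  rw [eq_top_iff]
  rintro g -
  obtain ⟨L, L', D, hM⟩ :=
    Pivot.exists_list_transvec_mul_diagonal_mul_list_transvec (g : Matrix (Fin n) (Fin n) K)
  obtain ⟨u, hu, hu'⟩ := hts L
  obtain ⟨u', hu'', hu'''⟩ := hts L'
  have hDval : ((u⁻¹ * g * u'⁻¹ : Matrix.GeneralLinearGroup (Fin n) K) :
      Matrix (Fin n) (Fin n) K) = diagonal D := by
    have hg' : (g : Matrix (Fin n) (Fin n) K) =
        (u : Matrix (Fin n) (Fin n) K) * diagonal D * (u' : Matrix (Fin n) (Fin n) K) := by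
      rw [hM, hu', hu''']
    have ha : ((u⁻¹ : Matrix.GeneralLinearGroup (Fin n) K) : Matrix (Fin n) (Fin n) K) *
        (u : Matrix (Fin n) (Fin n) K) = 1 := by
      rw [← Units.val_mul, inv_mul_cancel, Units.val_one]
    have hb : (u' : Matrix (Fin n) (Fin n) K) *
        ((u'⁻¹ : Matrix.GeneralLinearGroup (Fin n) K) : Matrix (Fin n) (Fin n) K) = 1 := by
      rw [← Units.val_mul, mul_inv_cancel, Units.val_one]
    rw [Units.val_mul, Units.val_mul, hg']
    simp only [Matrix.mul_assoc]
    rw [hb, Matrix.mul_one, ← Matrix.mul_assoc, ha, Matrix.one_mul]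
  have hDu : IsUnit (diagonal D : Matrix (Fin n) (Fin n) K) := by
    rw [← hDval]; exact (u⁻¹ * g * u'⁻¹).isUnit
  have hg : g = u * hDu.unit * u' := by
    apply Units.ext
    push_cast
    rw [IsUnit.unit_spec, hM, hu', hu''']
  rw [hg]
  exact mul_mem (mul_mem hu (hdiag _ _ (IsUnit.unit_spec hDu))) hu''
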